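/- Let 0 < α < d, 1 < p < q < d/α, and x ∈ ℓ^p_q(ℤ^d). There exists a constant C > 0 such that for every k ∈ ℤ^d, |I_α x(k)| ≤ C (Mx(k))^{1 − αq/d} ‖x‖_{ℓ^p_q(ℤ^d)}^{αq/d}. (Discrete Hedberg inequality.) -/

import Mathlib

open scoped BigOperators ENNReal

noncomputable section

/-- The discrete cube `S_{m,N} = {k : ‖k - m‖_∞ ≤ N}` in `ℤ^d`. -/
def cubeS (d : ℕ) (m : Fin d → ℤ) (N : ℕ) : Finset (Fin d → ℤ) :=
  Finset.Icc (fun i => m i - N) (fun i => m i + N)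

/-- `R_{m,N}`: the cube `S_{m,N}` with points having some coordinate `m i + N` removed. -/
def cubeR (d : ℕ) (m : Fin d → ℤ) (N : ℕ) : Finset (Fin d → ℤ) :=
  Finset.Ico (fun i => m i - N) (fun i => m i + N)

/-- The sup-norm `‖k‖_∞` of a point of `ℤ^d`, as a natural number. -/
def snorm' (d : ℕ) (k : Fin d → ℤ) : ℕ :=
  Finset.univ.sup fun i => (k i).natAbs

/-- The (centered, odd) discrete Hardy–Littlewood maximal operator. -/
def maxOp (d : ℕ) (x : (Fin d → ℤ) → ℝ) (m : Fin d → ℤ) : ℝ :=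
  ⨆ N : ℕ, (∑ k ∈ cubeS d m N, |x k|) / (2 * N + 1) ^ d

/-- The discrete Morrey norm `‖x‖_{ℓ^p_q(ℤ^d)}`. -/
def morreyNorm (d : ℕ) (p q : ℝ) (x : (Fin d → ℤ) → ℝ) : ℝ :=
  ⨆ mN : (Fin d → ℤ) × ℕ,
    (((2 * mN.2 + 1 : ℝ) ^ d) ^ (1 / q - 1 / p)) *
      (∑ k ∈ cubeS d mN.1 mN.2, |x k| ^ p) ^ (1 / p)

/-- Membership in the discrete Morrey space: the defining supremum is finite. -/
def MemMorrey (d : ℕ) (p q : ℝ) (x : (Fin d → ℤ) → ℝ) : Prop :=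
  BddAbove (Set.range fun mN : (Fin d → ℤ) × ℕ =>
    (((2 * mN.2 + 1 : ℝ) ^ d) ^ (1 / q - 1 / p)) *
      (∑ k ∈ cubeS d mN.1 mN.2, |x k| ^ p) ^ (1 / p))

/-- The discrete Riesz potential `I_α x (k) = ∑_{i ≠ k} x i / ‖k - i‖_∞^{d - α}`. -/
def rieszPot (d : ℕ) (α : ℝ) (x : (Fin d → ℤ) → ℝ) (k : Fin d → ℤ) : ℝ :=
  ∑' i : {i : Fin d → ℤ // i ≠ k}, x i / (snorm' d (k - i) : ℝ) ^ ((d : ℝ) - α)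

theorem card_cubeS (d : ℕ) (m : Fin d → ℤ) (N : ℕ) : (cubeS d m N).card = (2*N+1)^d := by
  rw [cubeS, Pi.card_Icc]
  have : ∀ j : Fin d, (Finset.Icc (m j - N) (m j + N)).card = 2*N+1 := by
    intro j; rw [Int.card_Icc]; omega
  rw [Finset.prod_congr rfl (fun j _ => this j), Finset.prod_const, Finset.card_univ,
    Fintype.card_fin]

theorem snorm_pos (d : ℕ) (k i : Fin d → ℤ) (h : i ≠ k) : 1 ≤ snorm' d (k - i) := by
  have : ∃ j, i j ≠ k j := by
    by_contra hc; push_neg at hc; exact h (funext hc)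
  obtain ⟨j, hj⟩ := this
  have : 1 ≤ ((k-i) j).natAbs := by rw [Pi.sub_apply]; omega
  exact le_trans this (Finset.le_sup (f := fun j => ((k-i) j).natAbs) (Finset.mem_univ j))

theorem mem_cubeS (d : ℕ) (k i : Fin d → ℤ) (N : ℕ) (h : snorm' d (k - i) ≤ N) :
    i ∈ cubeS d k N := by
  have key : ∀ j : Fin d, (k j : ℤ) - N ≤ i j ∧ i j ≤ k j + N := by
    intro j
    have h2 : ((k-i) j).natAbs ≤ N :=
      le_trans (Finset.le_sup (f := fun j => ((k-i) j).natAbs) (Finset.mem_univ j)) h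
    rw [Pi.sub_apply] at h2
    omega
  rw [cubeS, Finset.mem_Icc]
  exact ⟨fun j => (key j).1, fun j => (key j).2⟩

section
variable {d : ℕ} {p q : ℝ} {x : (Fin d → ℤ) → ℝ}

theorem morrey_nonneg (hx : MemMorrey d p q x) : 0 ≤ morreyNorm d p q x := by
  refine le_trans ?_ (le_ciSup hx ⟨fun _ => 0, 0⟩)
  positivity

theorem sumS_le_morrey (hp : 1 < p) (hq : 0 < q) (hx : MemMorrey d p q x)
    (m : Fin d → ℤ) (N : ℕ) :
    ∑ i ∈ cubeS d m N, |x i| ≤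
      morreyNorm d p q x * ((2 * N + 1 : ℝ) ^ d) ^ (1 - 1/q) := by
  set A := morreyNorm d p q x with hA
  set P : ℝ := (2 * N + 1 : ℝ) ^ d with hP
  have hP1 : (1:ℝ) ≤ P := one_le_pow₀ (by have : (0:ℝ) ≤ (N:ℝ) := Nat.cast_nonneg N; linarith)
  have hP0 : (0:ℝ) < P := lt_of_lt_of_le one_pos hP1
  have hcard : ((cubeS d m N).card : ℝ) = P := by
    rw [card_cubeS, hP]; push_cast; ring
  have hold := Real.inner_le_weight_mul_Lp_of_nonneg (cubeS d m N) hp.le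
    (fun _ => 1) (fun i => |x i|) (fun _ => zero_le_one) (fun i => abs_nonneg _)
  simp only [one_mul, Finset.sum_const, nsmul_eq_mul, mul_one] at hold
  rw [hcard] at hold
  have hxp : (∑ i ∈ cubeS d m N, |x i| ^ p) ^ (1/p) ≤ A * P ^ (1/p - 1/q) := by
    have h1 : P ^ (1/q - 1/p) * (∑ i ∈ cubeS d m N, |x i| ^ p) ^ (1/p) ≤ A :=
      le_ciSup hx ⟨m, N⟩
    have h2 : (0:ℝ) < P ^ (1/q - 1/p) := Real.rpow_pos_of_pos hP0 _
    have h3 : (∑ i ∈ cubeS d m N, |x i| ^ p) ^ (1/p) ≤ A / P ^ (1/q - 1/p) :=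
      (le_div_iff₀' h2).mpr h1
    have h4 : A / P ^ (1/q - 1/p) = A * P ^ (1/p - 1/q) := by
      rw [div_eq_mul_inv, ← Real.rpow_neg hP0.le, neg_sub]
    rw [h4] at h3; exact h3
  have hxp' : (∑ i ∈ cubeS d m N, |x i| ^ p) ^ p⁻¹ ≤ A * P ^ (1/p - 1/q) := by
    rw [← one_div]; exact hxp
  calc ∑ i ∈ cubeS d m N, |x i| ≤ P ^ (1 - p⁻¹) * (∑ i ∈ cubeS d m N, |x i| ^ p) ^ p⁻¹ := hold
    _ ≤ P ^ (1 - p⁻¹) * (A * P ^ (1/p - 1/q)) :=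
        mul_le_mul_of_nonneg_left hxp' (Real.rpow_nonneg hP0.le _)
    _ = A * (P ^ (1 - 1/p) * P ^ (1/p - 1/q)) := by rw [one_div]; ring
    _ = A * P ^ (1 - 1/q) := by rw [← Real.rpow_add hP0]; ring_nf

theorem avg_le_morrey (hp : 1 < p) (hq : 0 < q) (hx : MemMorrey d p q x)
    (m : Fin d → ℤ) (N : ℕ) :
    (∑ i ∈ cubeS d m N, |x i|) / (2 * N + 1 : ℝ) ^ d ≤ morreyNorm d p q x := by
  set A := morreyNorm d p q x with hA
  set P : ℝ := (2 * N + 1 : ℝ) ^ d with hP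
  have hP1 : (1:ℝ) ≤ P := one_le_pow₀ (by have : (0:ℝ) ≤ (N:ℝ) := Nat.cast_nonneg N; linarith)
  have hP0 : (0:ℝ) < P := lt_of_lt_of_le one_pos hP1
  have h := sumS_le_morrey hp hq hx m N
  rw [div_le_iff₀ hP0]
  calc ∑ i ∈ cubeS d m N, |x i| ≤ A * P ^ (1 - 1/q) := h
    _ ≤ A * P := by
        nth_rewrite 2 [(Real.rpow_one P).symm]
        gcongr
        · exact morrey_nonneg hx
        · have : 0 < 1/q := by positivity
          linarith

theorem maxOp_bdd (hp : 1 < p) (hq : 0 < q) (hx : MemMorrey d p q x) (k : Fin d → ℤ) :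
    BddAbove (Set.range fun N : ℕ => (∑ i ∈ cubeS d k N, |x i|) / (2 * N + 1 : ℝ) ^ d) := by
  refine ⟨morreyNorm d p q x, ?_⟩
  rintro y ⟨N, rfl⟩
  exact avg_le_morrey hp hq hx k N

theorem maxOp_le_morrey (hp : 1 < p) (hq : 0 < q) (hx : MemMorrey d p q x) (k : Fin d → ℤ) :
    maxOp d x k ≤ morreyNorm d p q x :=
  ciSup_le (avg_le_morrey hp hq hx k)

theorem maxOp_nonneg (hp : 1 < p) (hq : 0 < q) (hx : MemMorrey d p q x) (k : Fin d → ℤ) :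
    0 ≤ maxOp d x k :=
  le_trans (by positivity) (le_ciSup (maxOp_bdd hp hq hx k) 0)

theorem sumS_le_maxOp (hp : 1 < p) (hq : 0 < q) (hx : MemMorrey d p q x)
    (k : Fin d → ℤ) (N : ℕ) :
    ∑ i ∈ cubeS d k N, |x i| ≤ (2 * N + 1 : ℝ) ^ d * maxOp d x k := by
  have hP0 : (0:ℝ) < (2 * N + 1 : ℝ) ^ d := by positivity
  have h : (∑ i ∈ cubeS d k N, |x i|) / (2 * N + 1 : ℝ) ^ d ≤ maxOp d x k :=
    le_ciSup (maxOp_bdd hp hq hx k) N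
  rw [div_le_iff₀ hP0] at h
  linarith
end

theorem fiber_bound {d : ℕ} {α p q : ℝ} {x : (Fin d → ℤ) → ℝ}
    (hα : 0 < α) (hαd : α < d) (hp : 1 < p) (hq1 : 1 < q)
    (hx : MemMorrey d p q x) (k : Fin d → ℤ) (l : ℕ) (v : Finset (Fin d → ℤ))
    (hv : ∀ i ∈ v, 2^l ≤ snorm' d (k - i) ∧ snorm' d (k - i) ≤ 2^(l+1)) :
    ∑ i ∈ v, |x i| / ((snorm' d (k - i) : ℝ) ^ ((d:ℝ) - α)) ≤
      min ((8:ℝ)^d * maxOp d x k * ((2:ℝ)^α)^l)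
        ((8:ℝ)^d * morreyNorm d p q x * ((2:ℝ)^(α - (d:ℝ)/q))^l) := by
  set M := maxOp d x k
  set A := morreyNorm d p q x
  have hq0 : (0:ℝ) < q := lt_trans one_pos hq1
  have hdα : (0:ℝ) ≤ (d:ℝ) - α := by linarith
  have hD0 : (0:ℝ) < (2:ℝ) ^ (((l:ℝ)) * ((d:ℝ) - α)) := Real.rpow_pos_of_pos two_pos _
  -- step 1: pointwise bound on the denominator
  have step1 : ∑ i ∈ v, |x i| / ((snorm' d (k - i) : ℝ) ^ ((d:ℝ) - α)) ≤
      (∑ i ∈ v, |x i|) * ((2:ℝ) ^ ((l:ℝ) * ((d:ℝ) - α)))⁻¹ := by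
    rw [Finset.sum_mul]
    refine Finset.sum_le_sum fun i hi => ?_
    rw [← div_eq_mul_inv]
    have h1 : (((2^l : ℕ)) : ℝ) ≤ (snorm' d (k - i) : ℝ) := Nat.cast_le.mpr (hv i hi).1
    have h2 : (2:ℝ) ^ ((l:ℝ) * ((d:ℝ) - α)) ≤ (snorm' d (k - i) : ℝ) ^ ((d:ℝ) - α) := by
      have : (2:ℝ) ^ ((l:ℝ) * ((d:ℝ) - α)) = (((2:ℕ)^l : ℕ) : ℝ) ^ ((d:ℝ) - α) := by
        push_cast
        rw [← Real.rpow_natCast (2:ℝ) l, ← Real.rpow_mul (by norm_num)]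
      rw [this]
      exact Real.rpow_le_rpow (by positivity) h1 hdα
    exact div_le_div_of_nonneg_left (abs_nonneg _) hD0 h2
  -- step 2: enlarge to the cube
  have step2 : ∑ i ∈ v, |x i| ≤ ∑ i ∈ cubeS d k (2^(l+1)), |x i| := by
    refine Finset.sum_le_sum_of_subset_of_nonneg ?_ (fun i _ _ => abs_nonneg _)
    intro i hi
    exact mem_cubeS d k i _ (hv i hi).2
  have hbase : (2 * ((2:ℕ)^(l+1) : ℕ) + 1 : ℝ) ≤ (2:ℝ)^(l+3) := by
    have h2l : (1:ℝ) ≤ 2^l := one_le_pow₀ one_le_two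
    push_cast
    rw [pow_add, pow_add]
    norm_num
    nlinarith
  have hbase0 : (0:ℝ) ≤ (2 * ((2:ℕ)^(l+1) : ℕ) + 1 : ℝ) := by positivity
  refine le_min ?_ ?_
  · -- maximal function bound
    have step3 : ∑ i ∈ cubeS d k (2^(l+1)), |x i| ≤ ((2:ℝ)^(l+3))^d * M := by
      refine le_trans (sumS_le_maxOp hp hq0 hx k (2^(l+1))) ?_
      have hM : 0 ≤ M := maxOp_nonneg hp hq0 hx k
      exact mul_le_mul_of_nonneg_right (pow_le_pow_left₀ hbase0 hbase d) hM
    calc ∑ i ∈ v, |x i| / ((snorm' d (k - i) : ℝ) ^ ((d:ℝ) - α))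
        ≤ (∑ i ∈ v, |x i|) * ((2:ℝ) ^ ((l:ℝ) * ((d:ℝ) - α)))⁻¹ := step1
      _ ≤ (((2:ℝ)^(l+3))^d * M) * ((2:ℝ) ^ ((l:ℝ) * ((d:ℝ) - α)))⁻¹ := by
          refine mul_le_mul_of_nonneg_right (le_trans step2 step3) (by positivity)
      _ = (8:ℝ)^d * M * ((2:ℝ)^α)^l := by
          have e1 : ((2:ℝ)^(l+3))^d = (2:ℝ) ^ ((((l+3)*d : ℕ)):ℝ) := by
            rw [← pow_mul, Real.rpow_natCast]
          have e2 : (8:ℝ)^d * ((2:ℝ)^α)^l = (2:ℝ) ^ ((3*d : ℝ) + α * l) := by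
            rw [Real.rpow_add two_pos]
            congr 1
            · rw [show ((3:ℝ)*d) = (((3*d : ℕ)):ℝ) by push_cast; ring, Real.rpow_natCast,
                pow_mul]
              norm_num
            · rw [← Real.rpow_natCast ((2:ℝ)^α) l, ← Real.rpow_mul (by norm_num), mul_comm]
          have key : ((2:ℝ)^(l+3))^d * ((2:ℝ) ^ ((l:ℝ) * ((d:ℝ) - α)))⁻¹ =
              (8:ℝ)^d * ((2:ℝ)^α)^l := by
            rw [e1, ← Real.rpow_neg (by norm_num), ← Real.rpow_add two_pos, e2]
            congr 1
            push_cast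
            ring
          rw [mul_right_comm, key]
          ring
  · -- Morrey bound
    have step3 : ∑ i ∈ cubeS d k (2^(l+1)), |x i| ≤
        A * (((2:ℝ)^(l+3))^d) ^ (1 - 1/q) := by
      refine le_trans (sumS_le_morrey hp hq0 hx k (2^(l+1))) ?_
      have hA : 0 ≤ A := morrey_nonneg hx
      refine mul_le_mul_of_nonneg_left ?_ hA
      refine Real.rpow_le_rpow (by positivity) (pow_le_pow_left₀ hbase0 hbase d) ?_
      have h1q : 1/q < 1 := by rw [div_lt_one hq0]; exact hq1
      linarith
    calc ∑ i ∈ v, |x i| / ((snorm' d (k - i) : ℝ) ^ ((d:ℝ) - α))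
        ≤ (∑ i ∈ v, |x i|) * ((2:ℝ) ^ ((l:ℝ) * ((d:ℝ) - α)))⁻¹ := step1
      _ ≤ (A * (((2:ℝ)^(l+3))^d) ^ (1 - 1/q)) * ((2:ℝ) ^ ((l:ℝ) * ((d:ℝ) - α)))⁻¹ := by
          refine mul_le_mul_of_nonneg_right (le_trans step2 step3) (by positivity)
      _ ≤ (8:ℝ)^d * A * ((2:ℝ)^(α - (d:ℝ)/q))^l := by
          have hA : 0 ≤ A := morrey_nonneg hx
          have e1 : (((2:ℝ)^(l+3))^d) ^ (1 - 1/q) =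
              (2:ℝ) ^ (((((l+3)*d : ℕ)):ℝ) * (1 - 1/q)) := by
            rw [← pow_mul, ← Real.rpow_natCast (2:ℝ) ((l+3)*d), ← Real.rpow_mul (by norm_num)]
          have e2 : (8:ℝ)^d * ((2:ℝ)^(α - (d:ℝ)/q))^l = (2:ℝ) ^ ((3*d : ℝ) + (α - (d:ℝ)/q) * l) := by
            rw [Real.rpow_add two_pos]
            congr 1
            · rw [show ((3:ℝ)*d) = (((3*d : ℕ)):ℝ) by push_cast; ring, Real.rpow_natCast,
                pow_mul]
              norm_num
            · rw [← Real.rpow_natCast ((2:ℝ)^(α - (d:ℝ)/q)) l, ← Real.rpow_mul (by norm_num),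
                mul_comm]
          have key2 : (2:ℝ) ^ (((((l+3)*d : ℕ)):ℝ) * (1 - 1/q)) *
              ((2:ℝ) ^ ((l:ℝ) * ((d:ℝ) - α)))⁻¹ ≤ (8:ℝ)^d * ((2:ℝ)^(α - (d:ℝ)/q))^l := by
            rw [e2, ← Real.rpow_neg (by norm_num), ← Real.rpow_add two_pos]
            refine Real.rpow_le_rpow_of_exponent_le one_le_two ?_
            have hr : (0:ℝ) ≤ q⁻¹ := by positivity
            have hl : (0:ℝ) ≤ (l:ℝ) := Nat.cast_nonneg l
            have hd : (0:ℝ) ≤ (d:ℝ) := Nat.cast_nonneg d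
            push_cast
            rw [div_eq_mul_inv, div_eq_mul_inv]
            nlinarith [mul_nonneg hd hr]
          calc (A * (((2:ℝ)^(l+3))^d) ^ (1 - 1/q)) * ((2:ℝ) ^ ((l:ℝ) * ((d:ℝ) - α)))⁻¹
              = A * ((2:ℝ) ^ (((((l+3)*d : ℕ)):ℝ) * (1 - 1/q)) *
                ((2:ℝ) ^ ((l:ℝ) * ((d:ℝ) - α)))⁻¹) := by rw [e1]; ring
            _ ≤ A * ((8:ℝ)^d * ((2:ℝ)^(α - (d:ℝ)/q))^l) :=
                mul_le_mul_of_nonneg_left key2 hA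
            _ = (8:ℝ)^d * A * ((2:ℝ)^(α - (d:ℝ)/q))^l := by ring

theorem pow_rpow_comm (c : ℝ) (m : ℕ) : ((2:ℝ)^c)^m = ((2:ℝ)^m : ℝ)^c := by
  rw [← Real.rpow_natCast ((2:ℝ)^c) m, ← Real.rpow_mul (by norm_num), mul_comm,
    Real.rpow_mul (by norm_num), Real.rpow_natCast]

/-- The constant in the discrete Hedberg inequality. -/
def hedC (d : ℕ) (α q : ℝ) : ℝ :=
  (8:ℝ)^d * ((4:ℝ)^α / ((2:ℝ)^α - 1) + 1 / (1 - (2:ℝ)^(α - (d:ℝ)/q)))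

section
variable {d : ℕ} {α p q : ℝ} {x : (Fin d → ℤ) → ℝ}

set_option maxHeartbeats 1000000 in
theorem hedberg_aux (hα : 0 < α) (hαd : α < d) (hp : 1 < p) (hpq : p < q) (hq : q < (d:ℝ) / α)
    (hx : MemMorrey d p q x) (k : Fin d → ℤ) (u : Finset (Fin d → ℤ)) (hu : ∀ i ∈ u, i ≠ k) :
    ∑ i ∈ u, |x i| / ((snorm' d (k - i) : ℝ) ^ ((d:ℝ) - α)) ≤
      hedC d α q * (maxOp d x k) ^ (1 - α * q / d) * (morreyNorm d p q x) ^ (α * q / d) := by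
  have hq1 : 1 < q := hp.trans hpq
  have hq0 : (0:ℝ) < q := lt_trans one_pos hq1
  have hd0 : (0:ℝ) < d := lt_trans hα hαd
  set M := maxOp d x k with hM
  set A := morreyNorm d p q x with hA
  have hM0 : 0 ≤ M := maxOp_nonneg hp hq0 hx k
  have hA0 : 0 ≤ A := morrey_nonneg hx
  have hMA : M ≤ A := maxOp_le_morrey hp hq0 hx k
  clear_value M A
  set θ : ℝ := α * q / d with hθ
  have hθ0 : 0 < θ := by rw [hθ]; positivity
  have hθ1 : θ < 1 := by
    rw [hθ, div_lt_one hd0]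
    calc α * q < α * ((d:ℝ)/α) := by exact mul_lt_mul_of_pos_left hq hα
      _ = d := by field_simp
  -- constants
  set a : ℝ := (2:ℝ)^α with ha
  set b : ℝ := (2:ℝ)^(α - (d:ℝ)/q) with hb
  have ha1 : 1 < a := by
    rw [ha]; exact Real.one_lt_rpow_iff_of_pos two_pos |>.mpr (Or.inl ⟨one_lt_two, hα⟩)
  have hb0 : 0 < b := by rw [hb]; exact Real.rpow_pos_of_pos two_pos _
  have hb1 : b < 1 := by
    refine Real.rpow_lt_one_of_one_lt_of_neg one_lt_two ?_
    have : α * q < d := by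
      calc α * q < α * ((d:ℝ)/α) := mul_lt_mul_of_pos_left hq hα
        _ = d := by field_simp
    have : α < (d:ℝ)/q := by rw [lt_div_iff₀ hq0]; linarith
    rw [hb] at *
    linarith
  clear_value θ
  clear_value a
  clear_value b
  have hCpos : 0 < hedC d α q := by
    rw [hedC]
    have h4 : (0:ℝ) < (4:ℝ)^α := Real.rpow_pos_of_pos (by norm_num) _
    have : (0:ℝ) < (4:ℝ)^α / ((2:ℝ)^α - 1) := div_pos h4 (by rw [← ha]; linarith)
    have h2 : (0:ℝ) < 1 / (1 - (2:ℝ)^(α - (d:ℝ)/q)) := by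
      rw [← hb]; exact div_pos one_pos (by linarith)
    positivity
  by_cases hMz : M = 0
  · -- all terms vanish
    have hz : ∑ i ∈ u, |x i| / ((snorm' d (k - i) : ℝ) ^ ((d:ℝ) - α)) = 0 := by
      refine Finset.sum_eq_zero fun i hi => ?_
      have h1 : |x i| ≤ ∑ j ∈ cubeS d k (snorm' d (k - i)), |x j| :=
        Finset.single_le_sum (fun j _ => abs_nonneg (x j))
          (mem_cubeS d k i _ le_rfl)
      have h2 := sumS_le_maxOp hp hq0 hx k (snorm' d (k - i))
      rw [← hM, hMz, mul_zero] at h2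
      have : |x i| = 0 := le_antisymm (h1.trans h2) (abs_nonneg _)
      rw [this, zero_div]
    rw [hz]
    positivity
  · have hMpos : 0 < M := lt_of_le_of_ne hM0 (Ne.symm hMz)
    have hApos : 0 < A := lt_of_lt_of_le hMpos hMA
    set t : ℝ := A / M with hT
    have ht1 : 1 ≤ t := by rw [hT]; exact (one_le_div hMpos).mpr hMA
    have ht0 : 0 < t := lt_of_lt_of_le one_pos ht1
    clear_value t
    set s : ℝ := t ^ (q / (d:ℝ)) with hs
    clear_value s
    have hs1 : 1 ≤ s := by
      rw [hs]
      calc (1:ℝ) = 1 ^ (q / (d:ℝ)) := (Real.one_rpow _).symm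
        _ ≤ t ^ (q / (d:ℝ)) := Real.rpow_le_rpow zero_le_one ht1 (by positivity)
    have hs0 : 0 < s := lt_of_lt_of_le one_pos hs1
    set l₀ : ℕ := Nat.ceil (Real.logb 2 s) with hl₀
    have hlogb0 : 0 ≤ Real.logb 2 s := Real.logb_nonneg one_lt_two hs1
    have hl₀low : s ≤ (2:ℝ)^l₀ := by
      calc s = (2:ℝ) ^ Real.logb 2 s := (Real.rpow_logb two_pos (by norm_num) hs0).symm
        _ ≤ (2:ℝ) ^ ((l₀:ℝ)) := Real.rpow_le_rpow_of_exponent_le one_le_two (Nat.le_ceil _)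
        _ = (2:ℝ)^l₀ := Real.rpow_natCast 2 l₀
    have hl₀up : (2:ℝ)^l₀ ≤ 2 * s := by
      have h1 : (l₀:ℝ) ≤ Real.logb 2 s + 1 := by
        have := Nat.ceil_lt_add_one hlogb0
        rw [hl₀]; linarith
      calc (2:ℝ)^l₀ = (2:ℝ) ^ ((l₀:ℝ)) := (Real.rpow_natCast 2 l₀).symm
        _ ≤ (2:ℝ) ^ (Real.logb 2 s + 1) := Real.rpow_le_rpow_of_exponent_le one_le_two h1
        _ = (2:ℝ) ^ Real.logb 2 s * 2 := by rw [Real.rpow_add two_pos, Real.rpow_one]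
        _ = 2 * s := by rw [Real.rpow_logb two_pos (by norm_num) hs0]; ring
    clear_value l₀
    -- fiber decomposition
    set L : ℕ := u.sup (fun i => Nat.log 2 (snorm' d (k - i))) with hL
    clear_value L
    have hmaps : ∀ i ∈ u, Nat.log 2 (snorm' d (k - i)) ∈ Finset.range (L+1) := by
      intro i hi
      rw [Finset.mem_range, Nat.lt_succ_iff, hL]
      exact Finset.le_sup (f := fun i => Nat.log 2 (snorm' d (k - i))) hi
    have hdecomp : ∑ l ∈ Finset.range (L+1),
          ∑ i ∈ u.filter (fun i => Nat.log 2 (snorm' d (k - i)) = l),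
            |x i| / ((snorm' d (k - i) : ℝ) ^ ((d:ℝ) - α))
        = ∑ i ∈ u, |x i| / ((snorm' d (k - i) : ℝ) ^ ((d:ℝ) - α)) :=
      Finset.sum_fiberwise_of_maps_to hmaps _
    have hfib : ∀ l : ℕ,
        ∑ i ∈ u.filter (fun i => Nat.log 2 (snorm' d (k - i)) = l),
          |x i| / ((snorm' d (k - i) : ℝ) ^ ((d:ℝ) - α)) ≤
        (if l ≤ l₀ then (8:ℝ)^d * M * a^l else (8:ℝ)^d * A * b^l) := by
      intro l
      have hv : ∀ i ∈ u.filter (fun i => Nat.log 2 (snorm' d (k - i)) = l),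
          2^l ≤ snorm' d (k - i) ∧ snorm' d (k - i) ≤ 2^(l+1) := by
        intro i hi
        simp only [Finset.mem_filter] at hi
        have hne : snorm' d (k - i) ≠ 0 := by
          have := snorm_pos d k i (hu i hi.1); omega
        constructor
        · rw [← hi.2]
          exact Nat.pow_log_le_self 2 hne
        · have h2 := Nat.lt_pow_succ_log_self (b := 2) one_lt_two (snorm' d (k - i))
          rw [hi.2] at h2
          omega
      have h := fiber_bound hα hαd hp hq1 hx k l
        (u.filter (fun i => Nat.log 2 (snorm' d (k - i)) = l)) hv
      rw [← hM, ← hA, ← ha, ← hb] at h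
      split_ifs
      · exact h.trans (min_le_left _ _)
      · exact h.trans (min_le_right _ _)
    have main : ∑ i ∈ u, |x i| / ((snorm' d (k - i) : ℝ) ^ ((d:ℝ) - α)) ≤
        (8:ℝ)^d * M * (∑ l ∈ Finset.range (l₀+1), a^l) +
        (8:ℝ)^d * A * (b^(l₀+1) * (1 - b)⁻¹) := by
      rw [← hdecomp]
      refine le_trans (Finset.sum_le_sum fun l _ => hfib l) ?_
      rw [Finset.sum_ite]
      gcongr
      · -- first piece
        rw [← Finset.mul_sum]
        refine mul_le_mul_of_nonneg_left ?_ (by positivity)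
        refine Finset.sum_le_sum_of_subset_of_nonneg ?_ (fun l _ _ => by positivity)
        intro l hl
        simp only [Finset.mem_filter] at hl
        exact Finset.mem_range.mpr (Nat.lt_succ_of_le hl.2)
      · -- second piece
        rw [← Finset.mul_sum]
        refine mul_le_mul_of_nonneg_left ?_ (by positivity)
        have hsubset : (Finset.range (L+1)).filter (fun l => ¬ l ≤ l₀) ⊆
            Finset.Ico (l₀+1) (L+1) := by
          intro l hl
          simp only [Finset.mem_filter, Finset.mem_range] at hl
          rw [Finset.mem_Ico]
          omega
        calc ∑ l ∈ (Finset.range (L+1)).filter (fun l => ¬ l ≤ l₀), b^l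
            ≤ ∑ l ∈ Finset.Ico (l₀+1) (L+1), b^l :=
              Finset.sum_le_sum_of_subset_of_nonneg hsubset (fun l _ _ => by positivity)
          _ = ∑ j ∈ Finset.range (L+1-(l₀+1)), b^((l₀+1)+j) := by
              rw [Finset.sum_Ico_eq_sum_range]
          _ = b^(l₀+1) * ∑ j ∈ Finset.range (L+1-(l₀+1)), b^j := by
              rw [Finset.mul_sum]
              exact Finset.sum_congr rfl fun j _ => pow_add b (l₀+1) j
          _ ≤ b^(l₀+1) * (1 - b)⁻¹ := by
              refine mul_le_mul_of_nonneg_left ?_ (by positivity)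
              refine le_trans (Summable.sum_le_tsum (Finset.range (L+1-(l₀+1)))
                (fun j _ => by positivity) (summable_geometric_of_lt_one hb0.le hb1)) ?_
              rw [tsum_geometric_of_lt_one hb0.le hb1]
    -- geometric estimates
    have geo1 : ∑ l ∈ Finset.range (l₀+1), a^l ≤ (4:ℝ)^α * s^α / (a - 1) := by
      rw [geom_sum_eq (ne_of_gt ha1)]
      have h1 : a^(l₀+1) ≤ (4:ℝ)^α * s^α := by
        rw [ha, pow_rpow_comm α (l₀+1)]
        have h2 : ((2:ℝ)^(l₀+1) : ℝ) ≤ 4 * s := by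
          rw [pow_succ]
          nlinarith [hl₀up]
        calc ((2:ℝ)^(l₀+1) : ℝ)^α ≤ (4*s)^α :=
              Real.rpow_le_rpow (by positivity) h2 hα.le
          _ = (4:ℝ)^α * s^α := Real.mul_rpow (by norm_num) hs0.le
      have h3 : (0:ℝ) < a - 1 := by linarith
      rw [div_le_div_iff₀ h3 h3]
      nlinarith [pow_pos (lt_trans one_pos ha1) (l₀+1)]
    have geo2 : b^(l₀+1) * (1 - b)⁻¹ ≤ s^(α - (d:ℝ)/q) * (1 - b)⁻¹ := by
      refine mul_le_mul_of_nonneg_right ?_ (inv_nonneg.mpr (by linarith))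
      calc b^(l₀+1) = b^l₀ * b := pow_succ b l₀
        _ ≤ b^l₀ * 1 := mul_le_mul_of_nonneg_left hb1.le (pow_nonneg hb0.le _)
        _ = b^l₀ := mul_one _
        _ ≤ s^(α - (d:ℝ)/q) := by
            rw [hb, pow_rpow_comm]
            refine Real.rpow_le_rpow_of_nonpos hs0 hl₀low ?_
            have hαdq : α < (d:ℝ)/q := by
              rw [lt_div_iff₀ hq0]
              calc α * q < α * ((d:ℝ)/α) := mul_lt_mul_of_pos_left hq hα
                _ = d := by field_simp
            linarith
    -- convert s powers to M, A powers
    have hdne : (d:ℝ) ≠ 0 := ne_of_gt hd0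
    have hqne : q ≠ 0 := ne_of_gt hq0
    have hsα : s^α = t^θ := by
      rw [hs, ← Real.rpow_mul ht0.le]
      congr 1
      rw [hθ]; ring
    have hsneg : s^(α - (d:ℝ)/q) = t^(θ - 1) := by
      rw [hs, ← Real.rpow_mul ht0.le]
      congr 1
      rw [hθ]
      field_simp
    have hMt : M * t^θ = M^(1-θ) * A^θ := by
      rw [hT, Real.div_rpow hA0 hM0, Real.rpow_sub hMpos, Real.rpow_one]
      have : M^θ ≠ 0 := ne_of_gt (Real.rpow_pos_of_pos hMpos _)
      field_simp
    have hAt : A * t^(θ-1) = M^(1-θ) * A^θ := by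
      rw [hT, Real.div_rpow hA0 hM0, Real.rpow_sub hApos, Real.rpow_sub hMpos,
        Real.rpow_one, Real.rpow_one]
      have h1 : M^θ ≠ 0 := ne_of_gt (Real.rpow_pos_of_pos hMpos _)
      have h2 : A ≠ 0 := ne_of_gt hApos
      have h3 : M ≠ 0 := ne_of_gt hMpos
      have hMM : M^(1-θ) * M^θ = M := by
        rw [← Real.rpow_add hMpos]; norm_num
      field_simp
      linear_combination (-1 : ℝ) * hMM
    -- put everything together
    have final : ∑ i ∈ u, |x i| / ((snorm' d (k - i) : ℝ) ^ ((d:ℝ) - α)) ≤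
        hedC d α q * (M^(1-θ) * A^θ) := by
      refine main.trans ?_
      have step1 : (8:ℝ)^d * M * (∑ l ∈ Finset.range (l₀+1), a^l) ≤
          (8:ℝ)^d * ((4:ℝ)^α / (a-1)) * (M^(1-θ) * A^θ) := by
        calc (8:ℝ)^d * M * (∑ l ∈ Finset.range (l₀+1), a^l)
            ≤ (8:ℝ)^d * M * ((4:ℝ)^α * s^α / (a - 1)) := by
              refine mul_le_mul_of_nonneg_left geo1 (by positivity)
          _ = (8:ℝ)^d * ((4:ℝ)^α / (a-1)) * (M * t^θ) := by
              rw [hsα]; ring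
          _ = (8:ℝ)^d * ((4:ℝ)^α / (a-1)) * (M^(1-θ) * A^θ) := by rw [hMt]
      have step2 : (8:ℝ)^d * A * (b^(l₀+1) * (1 - b)⁻¹) ≤
          (8:ℝ)^d * (1/(1-b)) * (M^(1-θ) * A^θ) := by
        calc (8:ℝ)^d * A * (b^(l₀+1) * (1 - b)⁻¹)
            ≤ (8:ℝ)^d * A * (s^(α - (d:ℝ)/q) * (1 - b)⁻¹) := by
              refine mul_le_mul_of_nonneg_left geo2 (by positivity)
          _ = (8:ℝ)^d * (1/(1-b)) * (A * t^(θ-1)) := by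
              rw [hsneg]; field_simp
          _ = (8:ℝ)^d * (1/(1-b)) * (M^(1-θ) * A^θ) := by rw [hAt]
      calc (8:ℝ)^d * M * (∑ l ∈ Finset.range (l₀+1), a^l) +
            (8:ℝ)^d * A * (b^(l₀+1) * (1 - b)⁻¹)
          ≤ (8:ℝ)^d * ((4:ℝ)^α / (a-1)) * (M^(1-θ) * A^θ) +
            (8:ℝ)^d * (1/(1-b)) * (M^(1-θ) * A^θ) := add_le_add step1 step2
        _ = hedC d α q * (M^(1-θ) * A^θ) := by
            rw [hedC, ← ha, ← hb]; ring
    refine le_trans final (le_of_eq ?_)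
    rw [hθ]; ring
end


/-- discrete Hedberg inequality. -/
theorem discrete_hedberg (d : ℕ) (α p q : ℝ) (hα : 0 < α) (hαd : α < d)
    (hp : 1 < p) (hpq : p < q) (hq : q < d / α)
    (x : (Fin d → ℤ) → ℝ) (hx : MemMorrey d p q x) :
    ∃ C : ℝ, 0 < C ∧ ∀ k : Fin d → ℤ,
      |rieszPot d α x k| ≤
        C * (maxOp d x k) ^ (1 - α * q / d) * (morreyNorm d p q x) ^ (α * q / d) := by
  have hq1 : 1 < q := hp.trans hpq
  have hq0 : (0:ℝ) < q := lt_trans one_pos hq1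
  have hd0 : (0:ℝ) < d := lt_trans hα hαd
  have hCpos : 0 < hedC d α q := by
    have ha1 : 1 < (2:ℝ)^α :=
      Real.one_lt_rpow_iff_of_pos two_pos |>.mpr (Or.inl ⟨one_lt_two, hα⟩)
    have hb1 : (2:ℝ)^(α - (d:ℝ)/q) < 1 := by
      refine Real.rpow_lt_one_of_one_lt_of_neg one_lt_two ?_
      have h1 : α * q < d := by
        calc α * q < α * ((d:ℝ)/α) := mul_lt_mul_of_pos_left hq hα
          _ = d := by field_simp
      have h2 : α < (d:ℝ)/q := by rw [lt_div_iff₀ hq0]; linarith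
      linarith
    rw [hedC]
    have h4 : (0:ℝ) < (4:ℝ)^α := Real.rpow_pos_of_pos (by norm_num) _
    have h5 : (0:ℝ) < (4:ℝ)^α / ((2:ℝ)^α - 1) := div_pos h4 (by linarith)
    have h6 : (0:ℝ) < 1 / (1 - (2:ℝ)^(α - (d:ℝ)/q)) := div_pos one_pos (by linarith)
    positivity
  refine ⟨hedC d α q, hCpos, fun k => ?_⟩
  set B := hedC d α q * (maxOp d x k) ^ (1 - α * q / d) *
    (morreyNorm d p q x) ^ (α * q / d) with hB
  have key : ∀ w : Finset {i : Fin d → ℤ // i ≠ k},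
      ∑ i ∈ w, |x ↑i| / ((snorm' d (k - ↑i) : ℝ) ^ ((d:ℝ) - α)) ≤ B := by
    intro w
    have himg : ∀ i ∈ w.image Subtype.val, i ≠ k := by
      intro i hi
      rw [Finset.mem_image] at hi
      obtain ⟨j, _, rfl⟩ := hi
      exact j.2
    have h := hedberg_aux hα hαd hp hpq hq hx k (w.image Subtype.val) himg
    rwa [Finset.sum_image (fun a _ b _ h => Subtype.val_injective h)] at h
  have hnn : ∀ i : {i : Fin d → ℤ // i ≠ k},
      0 ≤ |x ↑i| / ((snorm' d (k - ↑i) : ℝ) ^ ((d:ℝ) - α)) := fun i => by positivity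
  have hsum : Summable (fun i : {i : Fin d → ℤ // i ≠ k} =>
      |x ↑i| / ((snorm' d (k - ↑i) : ℝ) ^ ((d:ℝ) - α))) :=
    summable_of_sum_le hnn key
  have heq : ∀ i : {i : Fin d → ℤ // i ≠ k},
      |x ↑i / ((snorm' d (k - ↑i) : ℝ) ^ ((d:ℝ) - α))| =
        |x ↑i| / ((snorm' d (k - ↑i) : ℝ) ^ ((d:ℝ) - α)) := by
    intro i
    rw [abs_div]
    congr 1
    exact abs_of_nonneg (by positivity)
  have habs : Summable (fun i : {i : Fin d → ℤ // i ≠ k} =>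
      |x ↑i / ((snorm' d (k - ↑i) : ℝ) ^ ((d:ℝ) - α))|) :=
    hsum.congr (fun i => (heq i).symm)
  have hnorm : Summable (fun i : {i : Fin d → ℤ // i ≠ k} =>
      ‖x ↑i / ((snorm' d (k - ↑i) : ℝ) ^ ((d:ℝ) - α))‖) := by
    simpa only [Real.norm_eq_abs] using habs
  calc |rieszPot d α x k|
      = ‖∑' i : {i : Fin d → ℤ // i ≠ k},
          x ↑i / ((snorm' d (k - ↑i) : ℝ) ^ ((d:ℝ) - α))‖ := by
        rw [rieszPot, Real.norm_eq_abs]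
    _ ≤ ∑' i : {i : Fin d → ℤ // i ≠ k},
          ‖x ↑i / ((snorm' d (k - ↑i) : ℝ) ^ ((d:ℝ) - α))‖ :=
        norm_tsum_le_tsum_norm hnorm
    _ = ∑' i : {i : Fin d → ℤ // i ≠ k},
          |x ↑i| / ((snorm' d (k - ↑i) : ℝ) ^ ((d:ℝ) - α)) := by
        refine tsum_congr fun i => ?_
        rw [Real.norm_eq_abs, heq i]
    _ ≤ B := Summable.tsum_le_of_sum_le hsum key
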